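/- Let A be a finitary abelian category with enough projectives and m ≥ 1. The linear map χ : H(C_m(P)) → H(C^m(P)) defined on basis elements by χ([M_∘]) = [M_•] if the differential d_0 of M_∘ is zero (where M_• is the m-term complex M_1 → M_2 → ⋯ → M_m with M_m := M_0 and the remaining differentials of M_∘), and χ([M_∘]) = 0 otherwise, is a surjective homomorphism of algebras, inducing an algebra isomorphism H(C_m(P))/I ≅ H(C^m(P)), where I is the ideal spanned by classes of m-cyclic complexes with d_0 ≠ 0. -/

import Mathlib

open CategoryTheory CategoryTheory.Limits
open scoped Classical

noncomputable section

attribute [local instance] CategoryTheory.isIsomorphicSetoid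

universe v u

variable {C : Type u} [Category.{v} C] [Abelian C]

/-- `f`, `g` form a short exact sequence `0 ⟶ N ⟶ L ⟶ M ⟶ 0`. -/
def IsSES {N L M : C} (f : N ⟶ L) (g : L ⟶ M) : Prop :=
  ∃ w : f ≫ g = 0, (CategoryTheory.ShortComplex.mk f g w).ShortExact

/-- The set of short exact sequences `0 ⟶ N ⟶ L ⟶ M ⟶ 0` with fixed objects. -/
def ExtW (M N L : C) : Type _ :=
  {p : (N ⟶ L) × (L ⟶ M) // IsSES p.1 p.2}

/-- Equivalence of extensions of `M` by `N` with middle term `L`. -/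
def extRel (M N L : C) (p q : ExtW M N L) : Prop :=
  ∃ θ : L ≅ L, p.1.1 ≫ θ.hom = q.1.1 ∧ θ.hom ≫ q.1.2 = p.1.2

/-- `Ext¹(M,N)_L`: equivalence classes of extensions of `M` by `N` with middle term `L`. -/
def ExtClasses (M N L : C) := Quot (extRel M N L)

/-- The Hall structure constant `|Ext¹(M,N)_L| / |Hom(M,N)|`. -/
def hallCoeff (M N L : C) : ℚ :=
  (Nat.card (ExtClasses M N L) : ℚ) / (Nat.card (M ⟶ N) : ℚ)

/-- Isomorphism classes of objects. -/
abbrev IsoCls (D : Type*) [Category D] := Quotient (isIsomorphicSetoid D)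

variable (P : C → Prop)

/-- The full, extension-closed subcategory of objects satisfying `P`
(e.g. complexes of projectives). -/
abbrev SubCat := ObjectProperty.FullSubcategory P

/-- Hall structure constants of the exact subcategory, computed by ambient
short exact sequences. -/
def hallCoeffP (M N L : SubCat P) : ℚ := hallCoeff M.obj N.obj L.obj

/-- The underlying vector space of the Hall algebra of the subcategory. -/
abbrev HallAlgP := IsoCls (SubCat P) →₀ ℚ

/-- Finiteness assumptions making the Hall multiplication well defined. -/
class HallFinitaryP : Prop where
  homFinite : ∀ X Y : SubCat P, Finite (X.obj ⟶ Y.obj)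
  suppFinite : ∀ M N : SubCat P,
    {κ : IsoCls (SubCat P) | hallCoeffP P M N (Quotient.out κ) ≠ 0}.Finite

/-- The Hall product of two basis elements. -/
def hallMulBasisP [HallFinitaryP P] (M N : SubCat P) : HallAlgP P :=
  ⟨(HallFinitaryP.suppFinite M N).toFinset,
    fun κ => hallCoeffP P M N (Quotient.out κ), by
      intro κ
      simp [Set.Finite.mem_toFinset]⟩

/-- The multiplication of the Hall algebra of the subcategory. -/
def hallMulP [HallFinitaryP P] (x y : HallAlgP P) : HallAlgP P :=
  x.sum fun κ a => y.sum fun κ' b => (a * b) • hallMulBasisP P κ.out κ'.out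


open ZeroObject

variable (m : ℕ)

/-- The category of `m`-cyclic complexes over `C`. -/
abbrev CyclicCx := HomologicalComplex C (ComplexShape.up' (1 : ZMod m))

/-- `m`-cyclic complexes of projectives. -/
abbrev cyclicProj : CyclicCx (C := C) m → Prop := fun X => ∀ i, Projective (X.X i)

/-- `m`-term complexes of projectives: bounded complexes supported in degrees `1,…,m`,
with projective components. -/
abbrev termProj : CochainComplex C ℤ → Prop :=
  fun X => (∀ i : ℤ, (i < 1 ∨ (m : ℤ) < i) → IsZero (X.X i)) ∧ ∀ i, Projective (X.X i)

theorem projective_of_isZero {X : C} (h : IsZero X) : Projective X := by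
  constructor
  intro E Y f e he
  exact ⟨h.to_ E, h.eq_of_src _ _⟩

/-- The `m`-term complex `M_• = (M_1 → ⋯ → M_m)` associated to an `m`-cyclic complex
`M_∘` (forgetting the differential `d_0`), where `M_m := M_0`. -/
def toTerm (X : CyclicCx (C := C) m) : CochainComplex C ℤ where
  X i := if 1 ≤ i ∧ i ≤ (m : ℤ) then X.X (i : ZMod m) else 0
  d i j :=
    if h : 1 ≤ i ∧ i + 1 ≤ (m : ℤ) ∧ i + 1 = j then
      eqToHom (if_pos (show 1 ≤ i ∧ i ≤ (m : ℤ) by omega)) ≫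
        X.d (i : ZMod m) (j : ZMod m) ≫
        eqToHom (if_pos (show 1 ≤ j ∧ j ≤ (m : ℤ) by omega)).symm
    else 0
  shape i j hij := by
    simp only [ComplexShape.up_Rel] at hij ⊢
    rw [dif_neg (by tauto)]
  d_comp_d' i j k hij hjk := by
    simp only [ComplexShape.up_Rel] at hij hjk ⊢
    by_cases h1 : 1 ≤ i ∧ i + 1 ≤ (m : ℤ) ∧ i + 1 = j
    · by_cases h2 : 1 ≤ j ∧ j + 1 ≤ (m : ℤ) ∧ j + 1 = k
      · rw [dif_pos h1, dif_pos h2]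
        simp
      · rw [dif_neg h2, comp_zero]
    · rw [dif_neg h1, zero_comp]

lemma toTerm_mem (X : CyclicCx (C := C) m) (hX : cyclicProj m X) :
    termProj (C := C) m (toTerm m X) := by
  refine ⟨fun i hi => ?_, fun i => ?_⟩
  · dsimp [toTerm]
    rw [if_neg (by omega)]
    exact isZero_zero C
  · dsimp [toTerm]
    split_ifs with h
    · exact hX _
    · exact projective_of_isZero (isZero_zero C)

/-- The map `χ : H(C_m(P)) → H(C^m(P))`. -/
def chi (x : HallAlgP (cyclicProj (C := C) m)) : HallAlgP (termProj (C := C) m) :=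
  x.sum fun κ a =>
    if (Quotient.out κ).obj.d 0 1 = 0 then
      Finsupp.single ⟦(⟨toTerm m (Quotient.out κ).obj,
        toTerm_mem m _ (Quotient.out κ).property⟩ : SubCat (termProj (C := C) m))⟧ a
    else 0

/-! ### Auxiliary material -/

section GeneralHall

variable {D : Type*} [Category D] [Abelian D]

lemma IsSES.conj {N L M N' L' M' : D} (eN : N ≅ N') (eL : L ≅ L') (eM : M ≅ M')
    {f : N ⟶ L} {g : L ⟶ M} (h : IsSES f g) :
    IsSES (eN.inv ≫ f ≫ eL.hom) (eL.inv ≫ g ≫ eM.hom) := by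
  obtain ⟨w, se⟩ := h
  have w' : (eN.inv ≫ f ≫ eL.hom) ≫ (eL.inv ≫ g ≫ eM.hom) = 0 := by
    simp [reassoc_of% w]
  refine ⟨w', ?_⟩
  have e : ShortComplex.mk f g w ≅ ShortComplex.mk _ _ w' :=
    ShortComplex.isoMk eN eL eM (by simp) (by simp)
  exact (ShortComplex.shortExact_iff_of_iso e).mp se

/-- Transport of extensions along isomorphisms of the three objects. -/
def extWCongr {N L M N' L' M' : D} (eM : M ≅ M') (eN : N ≅ N') (eL : L ≅ L') :
    ExtW M N L ≃ ExtW M' N' L' where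
  toFun p := ⟨(eN.inv ≫ p.1.1 ≫ eL.hom, eL.inv ≫ p.1.2 ≫ eM.hom), p.2.conj eN eL eM⟩
  invFun q := ⟨(eN.hom ≫ q.1.1 ≫ eL.inv, eL.hom ≫ q.1.2 ≫ eM.inv),
    q.2.conj eN.symm eL.symm eM.symm⟩
  left_inv p := by
    apply Subtype.ext
    simp
  right_inv q := by
    apply Subtype.ext
    simp

@[simp] lemma extWCongr_apply {N L M N' L' M' : D} (eM : M ≅ M') (eN : N ≅ N') (eL : L ≅ L')
    (p : ExtW M N L) :
    (extWCongr eM eN eL p).1 = (eN.inv ≫ p.1.1 ≫ eL.hom, eL.inv ≫ p.1.2 ≫ eM.hom) := rfl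

lemma extRel_congr_iff {N L M N' L' M' : D} (eM : M ≅ M') (eN : N ≅ N') (eL : L ≅ L')
    (p q : ExtW M N L) :
    extRel M N L p q ↔ extRel M' N' L' (extWCongr eM eN eL p) (extWCongr eM eN eL q) := by
  constructor
  · rintro ⟨θ, h1, h2⟩
    refine ⟨eL.symm ≪≫ θ ≪≫ eL, ?_, ?_⟩
    · simp [extWCongr_apply, reassoc_of% h1]
    · simp [extWCongr_apply, reassoc_of% h2]
  · rintro ⟨θ, h1, h2⟩
    refine ⟨eL ≪≫ θ ≪≫ eL.symm, ?_, ?_⟩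
    · simp only [extWCongr_apply, Iso.trans_hom, Iso.symm_hom] at h1 ⊢
      have := congrArg (fun t => eN.hom ≫ t ≫ eL.inv) h1
      simpa using this
    · simp only [extWCongr_apply, Iso.trans_hom, Iso.symm_hom] at h2 ⊢
      have := congrArg (fun t => eL.hom ≫ t ≫ eM.inv) h2
      simpa using this

/-- Transport of extension classes along isomorphisms. -/
def extClassesCongr {N L M N' L' M' : D} (eM : M ≅ M') (eN : N ≅ N') (eL : L ≅ L') :
    ExtClasses M N L ≃ ExtClasses M' N' L' :=
  Quot.congr (extWCongr eM eN eL) (extRel_congr_iff eM eN eL)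

lemma hallCoeff_congr {N L M N' L' M' : D} (eM : M ≅ M') (eN : N ≅ N') (eL : L ≅ L') :
    hallCoeff M N L = hallCoeff M' N' L' := by
  unfold hallCoeff
  rw [Nat.card_congr (extClassesCongr eM eN eL), Nat.card_congr (Iso.homCongr eM eN)]

lemma shortExact_of_isZero (S : ShortComplex D) (h1 : IsZero S.X₁) (h2 : IsZero S.X₂)
    (h3 : IsZero S.X₃) : S.ShortExact where
  exact := ShortComplex.exact_of_isZero_X₂ S h2
  mono_f := ⟨fun g h _ => h1.eq_of_tgt g h⟩
  epi_g := ⟨fun g h _ => h3.eq_of_src g h⟩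

end GeneralHall

section LiftIdx

/-- The representative in `{1, …, m}` of a residue class mod `m`. -/
def liftIdx (m : ℕ) (i : ZMod m) : ℤ := if i = 0 then (m : ℤ) else (i.val : ℤ)

variable (m : ℕ) [NeZero m]

lemma liftIdx_spec (i : ZMod m) :
    1 ≤ liftIdx m i ∧ liftIdx m i ≤ (m : ℤ) ∧ ((liftIdx m i : ℤ) : ZMod m) = i := by
  unfold liftIdx
  split_ifs with h
  · subst h
    refine ⟨by exact_mod_cast Nat.one_le_iff_ne_zero.2 (NeZero.ne m), le_refl _, by
      push_cast; simp⟩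
  · have hval : i.val < m := ZMod.val_lt i
    have h0 : i.val ≠ 0 := fun hc => h ((ZMod.val_eq_zero i).mp hc)
    refine ⟨by exact_mod_cast Nat.one_le_iff_ne_zero.2 h0, by exact_mod_cast hval.le, ?_⟩
    push_cast
    exact ZMod.natCast_rightInverse i

lemma liftIdx_coe {j : ℤ} (h1 : 1 ≤ j) (h2 : j ≤ (m : ℤ)) : liftIdx m ((j : ZMod m)) = j := by
  obtain ⟨a1, a2, a3⟩ := liftIdx_spec m ((j : ZMod m))
  have hz : ((liftIdx m ((j : ZMod m)) - j : ℤ) : ZMod m) = 0 := by push_cast [a3]; ring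
  have hdvd := (ZMod.intCast_zmod_eq_zero_iff_dvd _ m).mp hz
  have := Int.eq_zero_of_abs_lt_dvd hdvd (by
    have : (0:ℤ) < (m:ℤ) := by exact_mod_cast Nat.pos_of_ne_zero (NeZero.ne m)
    rw [abs_lt]; omega)
  omega

lemma liftIdx_succ (j : ZMod m) (hj : j ≠ 0) : liftIdx m (j + 1) = liftIdx m j + 1 := by
  obtain ⟨a1, a2, a3⟩ := liftIdx_spec m j
  have hne : liftIdx m j ≠ (m : ℤ) := by
    unfold liftIdx
    rw [if_neg hj]
    have := ZMod.val_lt j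
    omega
  have : ((liftIdx m j + 1 : ℤ) : ZMod m) = j + 1 := by push_cast [a3]; ring
  rw [← this, liftIdx_coe m (by omega) (by omega)]

lemma coe_ne_zero_of_bounds {i : ℤ} (h1 : 1 ≤ i) (h2 : i < (m : ℤ)) :
    ((i : ZMod m)) ≠ 0 := by
  intro hc
  have := liftIdx_coe m h1 h2.le
  rw [hc] at this
  unfold liftIdx at this
  rw [if_pos rfl] at this
  omega

end LiftIdx

section CongrHelpers

variable {ι : Type*} {c : ComplexShape ι}

lemma dCongr (M : HomologicalComplex C c) {a a' b b' : ι} (ha : a = a') (hb : b = b') :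
    M.d a b = eqToHom (congrArg M.X ha) ≫ M.d a' b' ≫ eqToHom (congrArg M.X hb).symm := by
  subst ha; subst hb; simp

lemma fCongr {M N : HomologicalComplex C c} (f : M ⟶ N) {a b : ι} (h : a = b) :
    f.f a = eqToHom (congrArg M.X h) ≫ f.f b ≫ eqToHom (congrArg N.X h).symm := by
  subst h; simp

end CongrHelpers

section ToTermLemmas

variable (m : ℕ)

lemma toTerm_X_eq (M : CyclicCx (C := C) m) {i : ℤ} (h : 1 ≤ i ∧ i ≤ (m : ℤ)) :
    (toTerm m M).X i = M.X ((i : ZMod m)) := if_pos h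

lemma toTerm_isZero (M : CyclicCx (C := C) m) (i : ℤ) (hi : i < 1 ∨ (m : ℤ) < i) :
    IsZero ((toTerm m M).X i) := by
  rw [show (toTerm m M).X i = 0 from if_neg (by omega)]
  exact isZero_zero C

lemma toTerm_d_eq (M : CyclicCx (C := C) m) {i j : ℤ} (h1 : 1 ≤ i) (h2 : i + 1 ≤ (m : ℤ))
    (h3 : i + 1 = j) :
    (toTerm m M).d i j = eqToHom (toTerm_X_eq m M ⟨h1, by omega⟩) ≫
      M.d ((i : ZMod m)) ((j : ZMod m)) ≫ eqToHom (toTerm_X_eq m M ⟨by omega, by omega⟩).symm :=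
  dif_pos ⟨h1, h2, h3⟩

lemma toTerm_d_eq_zero (M : CyclicCx (C := C) m) {i j : ℤ}
    (h : ¬(1 ≤ i ∧ i + 1 ≤ (m : ℤ) ∧ i + 1 = j)) : (toTerm m M).d i j = 0 :=
  dif_neg h

/-- The functorial action of `toTerm` on morphisms. -/
def toTermMap {M N : CyclicCx (C := C) m} (f : M ⟶ N) : toTerm m M ⟶ toTerm m N where
  f i := if h : 1 ≤ i ∧ i ≤ (m : ℤ) then
    eqToHom (toTerm_X_eq m M h) ≫ f.f ((i : ZMod m)) ≫ eqToHom (toTerm_X_eq m N h).symm else 0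
  comm' i j hij := by
    simp only [ComplexShape.up_Rel] at hij
    by_cases h : 1 ≤ i ∧ i + 1 ≤ (m : ℤ)
    · skip
      rw [toTerm_d_eq m M h.1 h.2 hij, toTerm_d_eq m N h.1 h.2 hij,
        dif_pos (show 1 ≤ i ∧ i ≤ (m : ℤ) by omega),
        dif_pos (show 1 ≤ j ∧ j ≤ (m : ℤ) by omega)]
      simp only [Category.assoc, eqToHom_trans_assoc, eqToHom_refl, Category.id_comp]
      rw [HomologicalComplex.Hom.comm_assoc]
    · rw [toTerm_d_eq_zero m M (by tauto), toTerm_d_eq_zero m N (by tauto),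
        comp_zero, zero_comp]

@[simp] lemma toTermMap_f_of_range {M N : CyclicCx (C := C) m} (f : M ⟶ N) {i : ℤ}
    (h : 1 ≤ i ∧ i ≤ (m : ℤ)) :
    (toTermMap m f).f i =
      eqToHom (toTerm_X_eq m M h) ≫ f.f ((i : ZMod m)) ≫ eqToHom (toTerm_X_eq m N h).symm :=
  dif_pos h

lemma toTermMap_id (M : CyclicCx (C := C) m) : toTermMap m (𝟙 M) = 𝟙 (toTerm m M) := by
  ext i
  by_cases h : 1 ≤ i ∧ i ≤ (m : ℤ)
  · rw [toTermMap_f_of_range m _ h]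
    simp
  · exact (toTerm_isZero m M i (by omega)).eq_of_src _ _

lemma toTermMap_comp {M N K : CyclicCx (C := C) m} (f : M ⟶ N) (g : N ⟶ K) :
    toTermMap m (f ≫ g) = toTermMap m f ≫ toTermMap m g := by
  ext i
  by_cases h : 1 ≤ i ∧ i ≤ (m : ℤ)
  · simp only [HomologicalComplex.comp_f, toTermMap_f_of_range m _ h]
    simp only [Category.assoc, eqToHom_trans_assoc, eqToHom_refl, Category.id_comp]
  · have : (toTermMap m (f ≫ g)).f i = 0 := dif_neg h
    rw [this, HomologicalComplex.comp_f]
    have h1 : (toTermMap m f).f i = 0 := dif_neg h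
    rw [h1, zero_comp]

lemma toTermMap_zero (M N : CyclicCx (C := C) m) :
    toTermMap m (0 : M ⟶ N) = 0 := by
  ext i
  by_cases h : 1 ≤ i ∧ i ≤ (m : ℤ)
  · rw [toTermMap_f_of_range m _ h]
    simp
  · exact (dif_neg h).trans rfl

variable [NeZero m]

lemma toTerm_X_eq' (M : CyclicCx (C := C) m) (j : ZMod m) :
    (toTerm m M).X (liftIdx m j) = M.X j := by
  rw [toTerm_X_eq m M ⟨(liftIdx_spec m j).1, (liftIdx_spec m j).2.1⟩, (liftIdx_spec m j).2.2]

lemma toTerm_d_lift (M : CyclicCx (C := C) m) (j : ZMod m) (hj : j ≠ 0) :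
    M.d j (j + 1) = eqToHom (toTerm_X_eq' m M j).symm ≫
      (toTerm m M).d (liftIdx m j) (liftIdx m j + 1) ≫
      eqToHom ((congrArg (toTerm m M).X (liftIdx_succ m j hj)).symm.trans
        (toTerm_X_eq' m M (j + 1))) := by
  have hb := liftIdx_spec m j
  have hb' := liftIdx_spec m (j + 1)
  have hsucc := liftIdx_succ m j hj
  rw [toTerm_d_eq m M hb.1 (by omega) rfl]
  have c1 : ((liftIdx m j : ℤ) : ZMod m) = j := hb.2.2
  have c2 : ((liftIdx m j + 1 : ℤ) : ZMod m) = j + 1 := by push_cast [c1]; ring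
  rw [dCongr M c1 c2]
  simp only [eqToHom_trans, eqToHom_trans_assoc, eqToHom_refl,
    Category.id_comp, Category.comp_id, Category.assoc]

/-- Inverse of `toTermMap` for cyclic complexes with vanishing `d₀`. -/
def ofTermMap {M N : CyclicCx (C := C) m} (hM : M.d 0 1 = 0) (hN : N.d 0 1 = 0)
    (φ : toTerm m M ⟶ toTerm m N) : M ⟶ N where
  f j := eqToHom (toTerm_X_eq' m M j).symm ≫ φ.f (liftIdx m j) ≫ eqToHom (toTerm_X_eq' m N j)
  comm' j k hjk := by
    change j + 1 = k at hjk
    subst hjk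
    by_cases hj : j = 0
    · subst hj
      rw [show ((0 : ZMod m) + 1) = 1 from zero_add 1, hM, hN, zero_comp, comp_zero]
    · skip
      rw [toTerm_d_lift m M j hj, toTerm_d_lift m N j hj,
        fCongr φ (liftIdx_succ m j hj)]
      simp only [Category.assoc, eqToHom_trans, eqToHom_trans_assoc, eqToHom_refl,
        Category.id_comp, Category.comp_id]
      rw [reassoc_of% (φ.comm (liftIdx m j) (liftIdx m j + 1))]

/-- `toTerm` is fully faithful on cyclic complexes with vanishing `d₀`. -/
def homEquivF {M N : CyclicCx (C := C) m} (hM : M.d 0 1 = 0) (hN : N.d 0 1 = 0) :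
    (M ⟶ N) ≃ (toTerm m M ⟶ toTerm m N) where
  toFun := toTermMap m
  invFun := ofTermMap m hM hN
  left_inv f := by
    ext j
    have hb := liftIdx_spec m j
    dsimp [ofTermMap]
    rw [toTermMap_f_of_range m f ⟨hb.1, hb.2.1⟩, fCongr f hb.2.2]
    simp [eqToHom_trans]
  right_inv φ := by
    ext i
    by_cases h : 1 ≤ i ∧ i ≤ (m : ℤ)
    · rw [toTermMap_f_of_range m _ h]
      dsimp [ofTermMap]
      rw [fCongr φ (liftIdx_coe m h.1 h.2)]
      simp [eqToHom_trans]
    · have h0 : (toTermMap m (ofTermMap m hM hN φ)).f i = 0 := dif_neg h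
      rw [h0]
      exact ((toTerm_isZero m M i (by omega)).eq_of_src _ _)

end ToTermLemmas

section SESTransfer

variable (m : ℕ) [NeZero m]

lemma toTerm_shortExact_iff {N L M : CyclicCx (C := C) m} (f : N ⟶ L) (g : L ⟶ M)
    (w : f ≫ g = 0) (w' : toTermMap m f ≫ toTermMap m g = 0) :
    (ShortComplex.mk f g w).ShortExact ↔
      (ShortComplex.mk (toTermMap m f) (toTermMap m g) w').ShortExact := by
  rw [HomologicalComplex.shortExact_iff_degreewise_shortExact,
    HomologicalComplex.shortExact_iff_degreewise_shortExact]
  constructor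
  · intro hS i
    by_cases h : 1 ≤ i ∧ i ≤ (m : ℤ)
    · refine (ShortComplex.shortExact_iff_of_iso ?_).mp (hS ((i : ZMod m)))
      refine ShortComplex.isoMk (eqToIso (toTerm_X_eq m N h).symm)
        (eqToIso (toTerm_X_eq m L h).symm) (eqToIso (toTerm_X_eq m M h).symm) ?_ ?_
      · change eqToHom (toTerm_X_eq m N h).symm ≫ (toTermMap m f).f i =
            f.f (i : ZMod m) ≫ eqToHom (toTerm_X_eq m L h).symm
        rw [toTermMap_f_of_range m f h]
        simp
      · change eqToHom (toTerm_X_eq m L h).symm ≫ (toTermMap m g).f i =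
            g.f (i : ZMod m) ≫ eqToHom (toTerm_X_eq m M h).symm
        rw [toTermMap_f_of_range m g h]
        simp
    · exact shortExact_of_isZero _ (toTerm_isZero m N i (by omega))
        (toTerm_isZero m L i (by omega)) (toTerm_isZero m M i (by omega))
  · intro hS j
    refine (ShortComplex.shortExact_iff_of_iso ?_).mp (hS (liftIdx m j))
    have hb := liftIdx_spec m j
    refine ShortComplex.isoMk (eqToIso (toTerm_X_eq' m N j)) (eqToIso (toTerm_X_eq' m L j))
      (eqToIso (toTerm_X_eq' m M j)) ?_ ?_
    · change eqToHom (toTerm_X_eq' m N j) ≫ f.f j =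
          (toTermMap m f).f (liftIdx m j) ≫ eqToHom (toTerm_X_eq' m L j)
      rw [toTermMap_f_of_range m f ⟨hb.1, hb.2.1⟩, fCongr f hb.2.2]
      simp [eqToHom_trans]
    · change eqToHom (toTerm_X_eq' m L j) ≫ g.f j =
          (toTermMap m g).f (liftIdx m j) ≫ eqToHom (toTerm_X_eq' m M j)
      rw [toTermMap_f_of_range m g ⟨hb.1, hb.2.1⟩, fCongr g hb.2.2]
      simp [eqToHom_trans]

lemma isSES_toTerm_iff {N L M : CyclicCx (C := C) m} (hM : M.d 0 1 = 0) (hN : N.d 0 1 = 0)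
    (f : N ⟶ L) (g : L ⟶ M) :
    IsSES f g ↔ IsSES (toTermMap m f) (toTermMap m g) := by
  constructor
  · rintro ⟨w, se⟩
    have w' : toTermMap m f ≫ toTermMap m g = 0 := by
      rw [← toTermMap_comp, w, toTermMap_zero]
    exact ⟨w', (toTerm_shortExact_iff m f g w w').mp se⟩
  · rintro ⟨w', se⟩
    have w : f ≫ g = 0 := by
      apply (homEquivF m hN hM).injective
      show toTermMap m (f ≫ g) = toTermMap m 0
      rw [toTermMap_comp, toTermMap_zero, w']
    exact ⟨w, (toTerm_shortExact_iff m f g w w').mpr se⟩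

lemma toTermMap_symm_apply {M N : CyclicCx (C := C) m} (hM : M.d 0 1 = 0) (hN : N.d 0 1 = 0)
    (φ : toTerm m M ⟶ toTerm m N) :
    toTermMap m ((homEquivF m hM hN).symm φ) = φ :=
  (homEquivF m hM hN).apply_symm_apply φ

variable {N L M : CyclicCx (C := C) m}

/-- Transport of extensions under `toTerm`. -/
def extWEquivF (hM : M.d 0 1 = 0) (hN : N.d 0 1 = 0) (hL : L.d 0 1 = 0) :
    ExtW M N L ≃ ExtW (toTerm m M) (toTerm m N) (toTerm m L) :=
  Equiv.subtypeEquiv ((homEquivF m hN hL).prodCongr (homEquivF m hL hM))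
    (fun p => isSES_toTerm_iff m hM hN p.1 p.2)

lemma extRel_toTerm_iff (hM : M.d 0 1 = 0) (hN : N.d 0 1 = 0) (hL : L.d 0 1 = 0)
    (p q : ExtW M N L) :
    extRel M N L p q ↔ extRel (toTerm m M) (toTerm m N) (toTerm m L)
      (extWEquivF m hM hN hL p) (extWEquivF m hM hN hL q) := by
  constructor
  · rintro ⟨θ, h1, h2⟩
    refine ⟨⟨toTermMap m θ.hom, toTermMap m θ.inv, ?_, ?_⟩, ?_, ?_⟩
    · rw [← toTermMap_comp, θ.hom_inv_id, toTermMap_id]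
    · rw [← toTermMap_comp, θ.inv_hom_id, toTermMap_id]
    · show toTermMap m p.1.1 ≫ toTermMap m θ.hom = toTermMap m q.1.1
      rw [← toTermMap_comp, h1]
    · show toTermMap m θ.hom ≫ toTermMap m q.1.2 = toTermMap m p.1.2
      rw [← toTermMap_comp, h2]
  · rintro ⟨θ, h1, h2⟩
    replace h1 : toTermMap m p.1.1 ≫ θ.hom = toTermMap m q.1.1 := h1
    replace h2 : θ.hom ≫ toTermMap m q.1.2 = toTermMap m p.1.2 := h2
    refine ⟨⟨(homEquivF m hL hL).symm θ.hom, (homEquivF m hL hL).symm θ.inv, ?_, ?_⟩, ?_, ?_⟩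
    · apply (homEquivF m hL hL).injective
      show toTermMap m _ = toTermMap m _
      rw [toTermMap_comp, toTermMap_symm_apply, toTermMap_symm_apply, θ.hom_inv_id,
        toTermMap_id]
    · apply (homEquivF m hL hL).injective
      show toTermMap m _ = toTermMap m _
      rw [toTermMap_comp, toTermMap_symm_apply, toTermMap_symm_apply, θ.inv_hom_id,
        toTermMap_id]
    · apply (homEquivF m hN hL).injective
      show toTermMap m _ = toTermMap m _
      rw [toTermMap_comp, toTermMap_symm_apply]
      exact h1
    · apply (homEquivF m hL hM).injective
      show toTermMap m _ = toTermMap m _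
      rw [toTermMap_comp, toTermMap_symm_apply]
      exact h2

/-- Transport of extension classes under `toTerm`. -/
def extClassesEquivF (hM : M.d 0 1 = 0) (hN : N.d 0 1 = 0) (hL : L.d 0 1 = 0) :
    ExtClasses M N L ≃ ExtClasses (toTerm m M) (toTerm m N) (toTerm m L) :=
  Quot.congr (extWEquivF m hM hN hL) (extRel_toTerm_iff m hM hN hL)

lemma hallCoeff_toTerm (hM : M.d 0 1 = 0) (hN : N.d 0 1 = 0) (hL : L.d 0 1 = 0) :
    hallCoeff M N L = hallCoeff (toTerm m M) (toTerm m N) (toTerm m L) := by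
  unfold hallCoeff
  rw [Nat.card_congr (extClassesEquivF m hM hN hL), Nat.card_congr (homEquivF m hM hN)]

lemma hallCoeff_vanish (hL : L.d 0 1 = 0) (h : ¬(M.d 0 1 = 0 ∧ N.d 0 1 = 0)) :
    hallCoeff M N L = 0 := by
  have hemp : IsEmpty (ExtW M N L) := by
    constructor
    rintro ⟨⟨f, g⟩, w, se⟩
    have hdeg := (HomologicalComplex.shortExact_iff_degreewise_shortExact _).mp se
    apply h
    constructor
    · have hepi : Epi (g.f 0) := (hdeg 0).epi_g
      have hc := g.comm 0 1
      rw [hL, zero_comp] at hc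
      rw [← cancel_epi (g.f 0), comp_zero]
      exact hc
    · have hmono : Mono (f.f 1) := (hdeg 1).mono_f
      have hc := f.comm 0 1
      rw [hL, comp_zero] at hc
      rw [← cancel_mono (f.f 1), zero_comp]
      exact hc.symm
  haveI : IsEmpty (ExtClasses M N L) := by
    constructor
    intro x
    induction x using Quot.ind with
    | _ p => exact hemp.false p
  unfold hallCoeff
  rw [Nat.card_of_isEmpty]
  simp

end SESTransfer

section OfTerm

variable (m : ℕ) [NeZero m]

/-- The cyclic complex (with `d₀ = 0`) associated to an `m`-term complex. -/
def ofTerm (X : CochainComplex C ℤ) : CyclicCx (C := C) m where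
  X j := X.X (liftIdx m j)
  d j k := if h : j ≠ 0 ∧ j + 1 = k then
      X.d (liftIdx m j) (liftIdx m j + 1) ≫
        eqToHom (congrArg X.X (show liftIdx m j + 1 = liftIdx m k by
          rw [← h.2, liftIdx_succ m j h.1]))
    else 0
  shape j k hjk := by
    dsimp at hjk ⊢
    rw [dif_neg (by tauto)]
  d_comp_d' j k l hjk hkl := by
    dsimp at hjk hkl ⊢
    by_cases h1 : j ≠ 0
    · by_cases h2 : k ≠ 0
      · rw [dif_pos ⟨h1, hjk⟩, dif_pos ⟨h2, hkl⟩,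
          dCongr X (show liftIdx m k = liftIdx m j + 1 by
            rw [← hjk, liftIdx_succ m j h1]) (rfl : liftIdx m k + 1 = liftIdx m k + 1)]
        simp
      · rw [dif_neg (show ¬(¬k = 0 ∧ k + 1 = l) by tauto), comp_zero]
    · rw [dif_neg (show ¬(¬j = 0 ∧ j + 1 = k) by tauto), zero_comp]

lemma ofTerm_d_zero (X : CochainComplex C ℤ) : (ofTerm m X).d 0 1 = 0 :=
  dif_neg (by simp)

lemma ofTerm_mem (X : CochainComplex C ℤ) (hX : termProj (C := C) m X) :
    cyclicProj m (ofTerm m X) := fun _ => hX.2 _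

lemma eqToHom_sandwich_aux {A B U V W Z : C} (f : U ⟶ V) (p : A = U) (p1 : A = B) (p2 : B = U)
    (p3 : V = W) (p4 : W = Z) (p5 : Z = V) :
    eqToHom p ≫ f = eqToHom p1 ≫ ((eqToHom p2 ≫ f ≫ eqToHom p3) ≫ eqToHom p4) ≫ eqToHom p5 := by
  subst p p1 p3 p4
  simp

/-- `toTerm` is essentially surjective onto `m`-term complexes. -/
def ofTermIso (X : CochainComplex C ℤ)
    (hX : ∀ i : ℤ, (i < 1 ∨ (m : ℤ) < i) → IsZero (X.X i)) :
    toTerm m (ofTerm m X) ≅ X :=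
  HomologicalComplex.Hom.isoOfComponents
    (fun i => if h : 1 ≤ i ∧ i ≤ (m : ℤ) then
        eqToIso ((toTerm_X_eq m _ h).trans (congrArg X.X (liftIdx_coe m h.1 h.2)))
      else (toTerm_isZero m _ i (by omega)).isoZero ≪≫ ((hX i (by omega)).isoZero).symm)
    (fun i j hij => by
      simp only [ComplexShape.up_Rel] at hij
      by_cases h1 : 1 ≤ i
      swap
      · exact (toTerm_isZero m _ i (by omega)).eq_of_src _ _
      by_cases h2 : (m : ℤ) < j
      · exact (hX j (by omega)).eq_of_tgt _ _
      · skip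
        rw [dif_pos (show 1 ≤ i ∧ i ≤ (m : ℤ) by omega),
          dif_pos (show 1 ≤ j ∧ j ≤ (m : ℤ) by omega),
          toTerm_d_eq m _ h1 (by omega) hij]
        have hne : ((i : ZMod m)) ≠ 0 := coe_ne_zero_of_bounds m h1 (by omega)
        have hd : (ofTerm m X).d ((i : ZMod m)) ((j : ZMod m)) =
            X.d (liftIdx m ((i : ZMod m))) (liftIdx m ((i : ZMod m)) + 1) ≫
              eqToHom (congrArg X.X (show liftIdx m ((i : ZMod m)) + 1 =
                liftIdx m ((j : ZMod m)) by
                  rw [show ((j : ℤ) : ZMod m) = ((i : ZMod m)) + 1 by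
                    rw [← hij]; push_cast; ring, liftIdx_succ m _ hne])) :=
          dif_pos ⟨hne, by rw [← hij]; push_cast; ring⟩
        rw [hd, dCongr X (liftIdx_coe m h1 (by omega))
          (show liftIdx m ((i : ZMod m)) + 1 = j by rw [liftIdx_coe m h1 (by omega)]; omega)]
        simp [eqToHom_trans]
        exact eqToHom_sandwich_aux _ _ _ _ _ _ _)

/-- Isomorphic cyclic complexes have isomorphic `m`-term complexes. -/
def toTermIso {M N : CyclicCx (C := C) m} (e : M ≅ N) : toTerm m M ≅ toTerm m N where
  hom := toTermMap m e.hom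
  inv := toTermMap m e.inv
  hom_inv_id := by rw [← toTermMap_comp, e.hom_inv_id, toTermMap_id]
  inv_hom_id := by rw [← toTermMap_comp, e.inv_hom_id, toTermMap_id]

/-- `toTerm` reflects isomorphisms on cyclic complexes with vanishing `d₀`. -/
def cyclicIsoOfToTermIso {M N : CyclicCx (C := C) m} (hM : M.d 0 1 = 0) (hN : N.d 0 1 = 0)
    (e : toTerm m M ≅ toTerm m N) : M ≅ N where
  hom := (homEquivF m hM hN).symm e.hom
  inv := (homEquivF m hN hM).symm e.inv
  hom_inv_id := by
    apply (homEquivF m hM hM).injective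
    show toTermMap m _ = toTermMap m _
    rw [toTermMap_comp, toTermMap_symm_apply, toTermMap_symm_apply, e.hom_inv_id, toTermMap_id]
  inv_hom_id := by
    apply (homEquivF m hN hN).injective
    show toTermMap m _ = toTermMap m _
    rw [toTermMap_comp, toTermMap_symm_apply, toTermMap_symm_apply, e.inv_hom_id, toTermMap_id]

lemma d0_eq_zero_of_iso {M N : CyclicCx (C := C) m} (e : M ≅ N) (hM : M.d 0 1 = 0) :
    N.d 0 1 = 0 := by
  have hc := e.inv.comm 0 1
  rw [hM, comp_zero] at hc
  haveI : IsIso (e.inv.f 1) :=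
    (inferInstance : IsIso ((HomologicalComplex.eval C _ (1 : ZMod m)).map e.inv))
  rw [← cancel_mono (e.inv.f 1), zero_comp]
  exact hc.symm

end OfTerm

section ClassLevel

/-- Isomorphisms in a full subcategory from ambient isomorphisms. -/
def mkSubIso {Q : C → Prop} {X Y : ObjectProperty.FullSubcategory Q} (e : X.obj ≅ Y.obj) : X ≅ Y :=
  ObjectProperty.isoMk _ e

/-- Ambient isomorphism underlying a subcategory isomorphism. -/
def ofSubIso {Q : C → Prop} {X Y : ObjectProperty.FullSubcategory Q} (e : X ≅ Y) : X.obj ≅ Y.obj :=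
  (ObjectProperty.ι Q).mapIso e

lemma hallCoeffP_congr {Q : C → Prop} {M N L M' N' L' : SubCat Q}
    (eM : M ≅ M') (eN : N ≅ N') (eL : L ≅ L') :
    hallCoeffP Q M N L = hallCoeffP Q M' N' L' :=
  hallCoeff_congr (ofSubIso eM) (ofSubIso eN) (ofSubIso eL)

variable (m : ℕ)

/-- `toTerm` on the subcategories of projectives. -/
def TT (X : SubCat (cyclicProj (C := C) m)) : SubCat (termProj (C := C) m) :=
  ⟨toTerm m X.obj, toTerm_mem m _ X.property⟩

/-- The class-level map induced by `toTerm`. -/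
def Tcls (κ : IsoCls (SubCat (cyclicProj (C := C) m))) :
    IsoCls (SubCat (termProj (C := C) m)) :=
  ⟦TT m (Quotient.out κ)⟧

variable [NeZero m]

/-- `ofTerm` on the subcategories of projectives. -/
def OT (Y : SubCat (termProj (C := C) m)) : SubCat (cyclicProj (C := C) m) :=
  ⟨ofTerm m Y.obj, ofTerm_mem m _ Y.property⟩

lemma d0_iff_of_subIso {X Y : SubCat (cyclicProj (C := C) m)} (e : X ≅ Y) :
    X.obj.d 0 1 = 0 ↔ Y.obj.d 0 1 = 0 :=
  ⟨d0_eq_zero_of_iso m (ofSubIso e), d0_eq_zero_of_iso m (ofSubIso e).symm⟩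

lemma d0_out_iff (X : SubCat (cyclicProj (C := C) m)) :
    (Quotient.out (⟦X⟧ : IsoCls (SubCat (cyclicProj (C := C) m)))).obj.d 0 1 = 0 ↔
      X.obj.d 0 1 = 0 :=
  d0_iff_of_subIso m (Classical.choice (Quotient.mk_out X))

lemma Tcls_mk (X : SubCat (cyclicProj (C := C) m)) :
    Tcls m ⟦X⟧ = ⟦TT m X⟧ :=
  Quotient.sound ⟨mkSubIso (toTermIso m (ofSubIso (Classical.choice (Quotient.mk_out X))))⟩

lemma Tcls_injOn {κ κ' : IsoCls (SubCat (cyclicProj (C := C) m))}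
    (hκ : (Quotient.out κ).obj.d 0 1 = 0) (hκ' : (Quotient.out κ').obj.d 0 1 = 0)
    (h : Tcls m κ = Tcls m κ') : κ = κ' := by
  obtain ⟨e⟩ := Quotient.exact (h : (⟦TT m (Quotient.out κ)⟧ :
    IsoCls (SubCat (termProj (C := C) m))) = ⟦TT m (Quotient.out κ')⟧)
  have e' : (Quotient.out κ).obj ≅ (Quotient.out κ').obj :=
    cyclicIsoOfToTermIso m hκ hκ' (ofSubIso e)
  rw [← Quotient.out_eq κ, ← Quotient.out_eq κ']
  exact Quotient.sound ⟨mkSubIso e'⟩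

lemma Tcls_OT (μ : IsoCls (SubCat (termProj (C := C) m))) :
    Tcls m ⟦OT m (Quotient.out μ)⟧ = μ := by
  rw [Tcls_mk]
  have e : TT m (OT m (Quotient.out μ)) ≅ Quotient.out μ :=
    mkSubIso (ofTermIso m (Quotient.out μ).obj (Quotient.out μ).property.1)
  have he : (⟦TT m (OT m (Quotient.out μ))⟧ : IsoCls (SubCat (termProj (C := C) m))) =
      ⟦Quotient.out μ⟧ := Quotient.sound ⟨e⟩
  rw [he, Quotient.out_eq]

lemma d0_OT (Y : SubCat (termProj (C := C) m)) : (OT m Y).obj.d 0 1 = 0 :=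
  ofTerm_d_zero m Y.obj

lemma hallCoeffP_TT {M N L : SubCat (cyclicProj (C := C) m)}
    (hM : M.obj.d 0 1 = 0) (hN : N.obj.d 0 1 = 0) (hL : L.obj.d 0 1 = 0) :
    hallCoeffP (cyclicProj (C := C) m) M N L =
      hallCoeffP (termProj (C := C) m) (TT m M) (TT m N) (TT m L) :=
  hallCoeff_toTerm m hM hN hL

lemma hallCoeffP_vanish {M N L : SubCat (cyclicProj (C := C) m)}
    (hL : L.obj.d 0 1 = 0) (h : ¬(M.obj.d 0 1 = 0 ∧ N.obj.d 0 1 = 0)) :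
    hallCoeffP (cyclicProj (C := C) m) M N L = 0 :=
  hallCoeff_vanish m hL h

end ClassLevel

section LinearPackaging

variable (m : ℕ)

/-- The image of a basis vector under `χ`. -/
def wV (κ : IsoCls (SubCat (cyclicProj (C := C) m))) : HallAlgP (termProj (C := C) m) :=
  if (Quotient.out κ).obj.d 0 1 = 0 then Finsupp.single (Tcls m κ) 1 else 0

/-- `χ` as a linear map. -/
def chiL : HallAlgP (cyclicProj (C := C) m) →ₗ[ℚ] HallAlgP (termProj (C := C) m) :=
  Finsupp.lsum ℚ fun κ => LinearMap.toSpanSingleton ℚ _ (wV m κ)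

lemma chiL_apply (x : HallAlgP (cyclicProj (C := C) m)) :
    chiL m x = x.sum fun κ a => a • wV m κ := by
  rw [chiL, Finsupp.lsum_apply]
  rfl

lemma chi_eq_chiL (x : HallAlgP (cyclicProj (C := C) m)) : chi m x = chiL m x := by
  rw [chiL_apply]
  unfold chi
  apply Finsupp.sum_congr
  intro κ _
  unfold wV
  split_ifs with h
  · rw [Finsupp.smul_single, smul_eq_mul, mul_one]
    rfl
  · simp

lemma chiL_single (κ : IsoCls (SubCat (cyclicProj (C := C) m))) (a : ℚ) :
    chiL m (Finsupp.single κ a) = a • wV m κ := by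
  rw [chiL, Finsupp.lsum_single, LinearMap.toSpanSingleton_apply]

/-- The Hall multiplication as a bilinear map. -/
def hallMulBL (P : C → Prop) [HallFinitaryP P] :
    HallAlgP P →ₗ[ℚ] HallAlgP P →ₗ[ℚ] HallAlgP P :=
  Finsupp.lsum ℚ fun κ => LinearMap.toSpanSingleton ℚ _
    (Finsupp.lsum ℚ fun κ' => LinearMap.toSpanSingleton ℚ _
      (hallMulBasisP P (Quotient.out κ) (Quotient.out κ')))

lemma hallMulP_eq_BL (P : C → Prop) [HallFinitaryP P] (x y : HallAlgP P) :
    hallMulP P x y = hallMulBL P x y := by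
  rw [hallMulBL, Finsupp.lsum_apply]
  unfold hallMulP
  rw [LinearMap.finsupp_sum_apply]
  apply Finsupp.sum_congr
  intro κ _
  rw [LinearMap.toSpanSingleton_apply, LinearMap.smul_apply, Finsupp.lsum_apply,
    Finsupp.smul_sum]
  apply Finsupp.sum_congr
  intro κ' _
  rw [LinearMap.toSpanSingleton_apply, smul_smul, mul_comm]

lemma hallMulBL_single (P : C → Prop) [HallFinitaryP P]
    (κ κ' : IsoCls (SubCat P)) (a b : ℚ) :
    hallMulBL P (Finsupp.single κ a) (Finsupp.single κ' b) =
      (a * b) • hallMulBasisP P (Quotient.out κ) (Quotient.out κ') := by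
  rw [hallMulBL, Finsupp.lsum_single, LinearMap.toSpanSingleton_apply, LinearMap.smul_apply,
    Finsupp.lsum_single, LinearMap.toSpanSingleton_apply, smul_smul, mul_comm]

lemma hallMulBasisP_apply (P : C → Prop) [HallFinitaryP P] (M N : SubCat P)
    (κ : IsoCls (SubCat P)) :
    hallMulBasisP P M N κ = hallCoeffP P M N (Quotient.out κ) := rfl

end LinearPackaging

section KeyLemma

variable (m : ℕ) [NeZero m]
  [HallFinitaryP (cyclicProj (C := C) m)] [HallFinitaryP (termProj (C := C) m)]

lemma wV_apply (κ : IsoCls (SubCat (cyclicProj (C := C) m)))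
    (μ : IsoCls (SubCat (termProj (C := C) m))) :
    wV m κ μ = if (Quotient.out κ).obj.d 0 1 = 0 ∧ Tcls m κ = μ then 1 else 0 := by
  unfold wV
  by_cases h : (Quotient.out κ).obj.d 0 1 = 0
  · rw [if_pos h, Finsupp.single_apply]
    by_cases h2 : Tcls m κ = μ
    · rw [if_pos h2, if_pos ⟨h, h2⟩]
    · rw [if_neg h2, if_neg (by tauto)]
  · rw [if_neg h, if_neg (by tauto)]
    rfl

lemma chiL_hallMulBasis (κ κ' : IsoCls (SubCat (cyclicProj (C := C) m))) :
    chiL m (hallMulBasisP (cyclicProj (C := C) m) (Quotient.out κ) (Quotient.out κ')) =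
      hallMulBL (termProj (C := C) m) (wV m κ) (wV m κ') := by
  by_cases hMN : (Quotient.out κ).obj.d 0 1 = 0 ∧ (Quotient.out κ').obj.d 0 1 = 0
  · obtain ⟨hM, hN⟩ := hMN
    rw [show wV m κ = Finsupp.single (Tcls m κ) 1 from if_pos hM,
        show wV m κ' = Finsupp.single (Tcls m κ') 1 from if_pos hN,
        hallMulBL_single, one_mul, one_smul]
    rw [chiL_apply]
    ext μ
    rw [Finsupp.sum_apply, hallMulBasisP_apply]
    set lam0 : IsoCls (SubCat (cyclicProj (C := C) m)) := ⟦OT m (Quotient.out μ)⟧ with hlam0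
    have hd0lam0 : (Quotient.out lam0).obj.d 0 1 = 0 := (d0_out_iff m _).mpr (d0_OT m _)
    have hTlam0 : Tcls m lam0 = μ := Tcls_OT m μ
    have key : ∀ lam : IsoCls (SubCat (cyclicProj (C := C) m)),
        (Quotient.out lam).obj.d 0 1 = 0 → Tcls m lam = μ →
        hallCoeffP (cyclicProj (C := C) m) (Quotient.out κ) (Quotient.out κ')
            (Quotient.out lam) =
          hallCoeffP (termProj (C := C) m) (Quotient.out (Tcls m κ)) (Quotient.out (Tcls m κ'))
            (Quotient.out μ) := by
      intro lam hd hT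
      rw [hallCoeffP_TT m hM hN hd]
      have hT' : (⟦TT m (Quotient.out lam)⟧ :
          IsoCls (SubCat (termProj (C := C) m))) = μ := hT
      subst hT'
      exact hallCoeffP_congr
        (Classical.choice (Quotient.mk_out (TT m (Quotient.out κ)))).symm
        (Classical.choice (Quotient.mk_out (TT m (Quotient.out κ')))).symm
        (Classical.choice (Quotient.mk_out (TT m (Quotient.out lam)))).symm
    rw [Finsupp.sum, Finset.sum_eq_single lam0]
    · rw [Finsupp.smul_apply, wV_apply, if_pos ⟨hd0lam0, hTlam0⟩, smul_eq_mul, mul_one,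
        hallMulBasisP_apply]
      exact key lam0 hd0lam0 hTlam0
    · intro b _ hbne
      rw [Finsupp.smul_apply, wV_apply]
      by_cases hb : (Quotient.out b).obj.d 0 1 = 0 ∧ Tcls m b = μ
      · exact absurd (Tcls_injOn m hb.1 hd0lam0 (hb.2.trans hTlam0.symm)) hbne
      · rw [if_neg hb, smul_zero]
    · intro hlam0s
      rw [Finsupp.notMem_support_iff] at hlam0s
      rw [hlam0s, zero_smul, Finsupp.zero_apply]
  · have hchi0 : chiL m (hallMulBasisP (cyclicProj (C := C) m) (Quotient.out κ)
        (Quotient.out κ')) = 0 := by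
      rw [chiL_apply, Finsupp.sum]
      apply Finset.sum_eq_zero
      intro lam hlam
      have hd : ¬(Quotient.out lam).obj.d 0 1 = 0 := by
        intro hd0
        rw [Finsupp.mem_support_iff, hallMulBasisP_apply] at hlam
        exact hlam (hallCoeffP_vanish m hd0 hMN)
      rw [show wV m lam = 0 from if_neg hd, smul_zero]
    rw [hchi0]
    rcases not_and_or.mp hMN with h | h
    · rw [show wV m κ = 0 from if_neg h]
      simp
    · rw [show wV m κ' = 0 from if_neg h]
      simp

lemma chiL_mulBL (x y : HallAlgP (cyclicProj (C := C) m)) :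
    chiL m (hallMulBL (cyclicProj (C := C) m) x y) =
      hallMulBL (termProj (C := C) m) (chiL m x) (chiL m y) := by
  have hext : (hallMulBL (cyclicProj (C := C) m)).compr₂ (chiL m) =
      ((hallMulBL (termProj (C := C) m)).comp (chiL m)).compl₂ (chiL m) := by
    ext κ κ'
    simp only [LinearMap.compr₂_apply, LinearMap.compl₂_apply, LinearMap.comp_apply,
      Finsupp.lsingle_apply]
    rw [hallMulBL_single, one_mul, one_smul, chiL_single, chiL_single, one_smul, one_smul,
      chiL_hallMulBasis m κ κ']
  have h := LinearMap.congr_fun (LinearMap.congr_fun hext x) y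
  simpa using h

end KeyLemma

/-- **`χ` is a surjective algebra homomorphism, with kernel the ideal `I` spanned by the
classes of `m`-cyclic complexes with `d₀ ≠ 0`; hence it induces an algebra isomorphism
`H(C_m(P))/I ≅ H(C^m(P))`.** -/
theorem chi_surjective_algHom (hm : 1 ≤ m)
    [HallFinitaryP (cyclicProj (C := C) m)] [HallFinitaryP (termProj (C := C) m)] :
    IsLinearMap ℚ (chi (C := C) m) ∧
    (∀ x y, chi m (hallMulP (cyclicProj (C := C) m) x y) =
      hallMulP (termProj (C := C) m) (chi m x) (chi m y)) ∧
    Function.Surjective (chi (C := C) m) ∧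
    (∀ x, chi m x = 0 ↔ x ∈ Submodule.span ℚ
      {v : HallAlgP (cyclicProj (C := C) m) |
        ∃ κ : IsoCls (SubCat (cyclicProj (C := C) m)),
          (Quotient.out κ).obj.d 0 1 ≠ 0 ∧ v = Finsupp.single κ (1 : ℚ)}) := by
  haveI : NeZero m := ⟨by omega⟩
  refine ⟨⟨fun x y => by rw [chi_eq_chiL, chi_eq_chiL, chi_eq_chiL, map_add],
    fun c x => by rw [chi_eq_chiL, chi_eq_chiL, map_smul]⟩, ?_, ?_, ?_⟩
  · intro x y
    simp only [chi_eq_chiL, hallMulP_eq_BL]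
    exact chiL_mulBL m x y
  · intro y
    refine ⟨y.sum fun μ b => Finsupp.single
      (⟦OT m (Quotient.out μ)⟧ : IsoCls (SubCat (cyclicProj (C := C) m))) b, ?_⟩
    rw [chi_eq_chiL, map_finsuppSum]
    have hterm : ∀ (μ : IsoCls (SubCat (termProj (C := C) m))) (b : ℚ),
        chiL m (Finsupp.single
          (⟦OT m (Quotient.out μ)⟧ : IsoCls (SubCat (cyclicProj (C := C) m))) b) =
          Finsupp.single μ b := by
      intro μ b
      rw [chiL_single,
        show wV m (⟦OT m (Quotient.out μ)⟧ : IsoCls (SubCat (cyclicProj (C := C) m))) =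
          Finsupp.single (Tcls m ⟦OT m (Quotient.out μ)⟧) 1 from
            if_pos ((d0_out_iff m _).mpr (d0_OT m _)),
        Tcls_OT, Finsupp.smul_single, smul_eq_mul, mul_one]
    have h2 : (y.sum fun μ b => chiL m (Finsupp.single
        (⟦OT m (Quotient.out μ)⟧ : IsoCls (SubCat (cyclicProj (C := C) m))) b)) =
        y.sum fun μ b => Finsupp.single μ b :=
      Finsupp.sum_congr fun μ _ => hterm μ _
    rw [h2, Finsupp.sum_single]
  · intro x
    constructor
    · intro h0
      rw [chi_eq_chiL] at h0
      set x₁ := x.filter (fun κ => (Quotient.out κ).obj.d 0 1 = 0) with hx1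
      set x₂ := x.filter (fun κ => ¬(Quotient.out κ).obj.d 0 1 = 0) with hx2
      have hsplit : x₁ + x₂ = x := Finsupp.filter_pos_add_filter_neg x _
      have hchi2 : chiL m x₂ = 0 := by
        rw [chiL_apply, Finsupp.sum]
        apply Finset.sum_eq_zero
        intro κ hκ
        rw [hx2, Finsupp.support_filter, Finset.mem_filter] at hκ
        rw [show wV m κ = 0 from if_neg hκ.2, smul_zero]
      have hchi1 : chiL m x₁ = 0 := by
        have hadd := congrArg (chiL m) hsplit
        rw [map_add, hchi2, add_zero, h0] at hadd
        exact hadd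
      have hx1zero : x₁ = 0 := by
        have hmap : chiL m x₁ = Finsupp.mapDomain (Tcls m) x₁ := by
          rw [chiL_apply]
          unfold Finsupp.mapDomain
          apply Finsupp.sum_congr
          intro κ hκ
          rw [hx1, Finsupp.support_filter, Finset.mem_filter] at hκ
          rw [show wV m κ = Finsupp.single (Tcls m κ) 1 from if_pos hκ.2,
            Finsupp.smul_single, smul_eq_mul, mul_one]
        have hinj := Finsupp.mapDomain_injOn
          (M := ℚ) {κ : IsoCls (SubCat (cyclicProj (C := C) m)) |
            (Quotient.out κ).obj.d 0 1 = 0} (f := Tcls m)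
          (fun a ha b hb hab => Tcls_injOn m ha hb hab)
        refine hinj ?_ ?_ ?_
        · intro κ hκ
          rw [Finset.mem_coe, hx1, Finsupp.support_filter, Finset.mem_filter] at hκ
          exact hκ.2
        · simp
        · rw [← hmap, hchi1, Finsupp.mapDomain_zero]
      rw [← hsplit, hx1zero, zero_add, ← Finsupp.sum_single x₂, Finsupp.sum]
      apply Submodule.sum_mem
      intro κ hκ
      rw [show Finsupp.single κ (x₂ κ) = (x₂ κ) • Finsupp.single κ (1 : ℚ) by
        rw [Finsupp.smul_single, smul_eq_mul, mul_one]]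
      apply Submodule.smul_mem
      apply Submodule.subset_span
      refine ⟨κ, ?_, rfl⟩
      rw [hx2, Finsupp.support_filter, Finset.mem_filter] at hκ
      exact hκ.2
    · intro hx
      rw [chi_eq_chiL]
      have hle : Submodule.span ℚ
          {v : HallAlgP (cyclicProj (C := C) m) |
            ∃ κ : IsoCls (SubCat (cyclicProj (C := C) m)),
              (Quotient.out κ).obj.d 0 1 ≠ 0 ∧ v = Finsupp.single κ (1 : ℚ)} ≤
          LinearMap.ker (chiL m) := by
        rw [Submodule.span_le]
        rintro v ⟨κ, hκ, rfl⟩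
        rw [SetLike.mem_coe, LinearMap.mem_ker, chiL_single,
          show wV m κ = 0 from if_neg hκ, smul_zero]
      exact hle hx

end
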